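/- Let X be a Hausdorff topological space, T ⊆ ℝⁿ a subset, Ψ : X → T a continuous proper map, and w₀ ∈ T. Suppose every point of Ψ⁻¹(w₀) has a connected open neighbourhood in Ψ⁻¹(w₀) with respect to the relative topology. Then there exists ε > 0 such that whenever [x] and [y] are distinct connected components of Ψ⁻¹(w₀), the sets U_{[x],ε} and U_{[y],ε} are disjoint, where U_{[x],ε} denotes the connected component of x in Ψ⁻¹(B(w₀,ε)). -/

import Mathlib

open Set Metric

open Filter Topology

/-- A path `c : ℝ → ℝⁿ`, considered on `[0,1]`, is *monotone straight* if either it is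
constant, or its image is the segment `[c 0, c 1]` and it parametrizes this segment
weakly monotonically. -/
def MonotoneStraight {n : ℕ} (c : ℝ → EuclideanSpace ℝ (Fin n)) : Prop :=
  (∀ t ∈ Set.Icc (0:ℝ) 1, c t = c 0) ∨
  ((c '' Set.Icc (0:ℝ) 1 = segment ℝ (c 0) (c 1)) ∧
   ∀ t₁ t₂ t₃ : ℝ, 0 ≤ t₁ → t₁ < t₂ → t₂ < t₃ → t₃ ≤ 1 →
     c t₂ ∈ segment ℝ (c t₁) (c t₃))

/-- The restriction of `Ψ` to `U` is a *convex map*: any two points of `U` are joined by a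
continuous path in `U` whose composition with `Ψ` is monotone straight. -/
def IsConvexMapOn {n : ℕ} {X : Type*} [TopologicalSpace X]
    (Ψ : X → EuclideanSpace ℝ (Fin n)) (U : Set X) : Prop :=
  ∀ x₀ ∈ U, ∀ x₁ ∈ U, ∃ γ : ℝ → X,
    ContinuousOn γ (Set.Icc 0 1) ∧ (∀ t ∈ Set.Icc (0:ℝ) 1, γ t ∈ U) ∧
    γ 0 = x₀ ∧ γ 1 = x₁ ∧ MonotoneStraight (Ψ ∘ γ)

/-- The restriction `Ψ|_U : U → Ψ(U)` is an open map onto its image: the image of every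
relatively open subset of `U` is relatively open in `Ψ(U)`. -/
def IsOpenOnto {n : ℕ} {X : Type*} [TopologicalSpace X]
    (Ψ : X → EuclideanSpace ℝ (Fin n)) (U : Set X) : Prop :=
  ∀ O : Set X, IsOpen O → ∃ V : Set (EuclideanSpace ℝ (Fin n)),
    IsOpen V ∧ Ψ '' (O ∩ U) = V ∩ Ψ '' U

/-- The `Ψ`-distance: the infimum of the lengths (total variations) of `Ψ ∘ γ` over all
continuous paths `γ` in `X` from `x₀` to `x₁`; takes values in `[0,∞]`. -/
noncomputable def psiDist {n : ℕ} {X : Type*} [TopologicalSpace X]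
    (Ψ : X → EuclideanSpace ℝ (Fin n)) (x₀ x₁ : X) : ENNReal :=
  ⨅ γ ∈ {γ : ℝ → X | ContinuousOn γ (Set.Icc 0 1) ∧ γ 0 = x₀ ∧ γ 1 = x₁},
    eVariationOn (Ψ ∘ γ) (Set.Icc 0 1)

/-- For a proper map whose level set is locally connected (in the relative topology), for
small ε distinct components of the level set lie in disjoint components of the preimage of
the ε-ball. -/
theorem exists_eps_disjoint_components {n : ℕ} {X : Type*} [TopologicalSpace X] [T2Space X]
    (T : Set (EuclideanSpace ℝ (Fin n)))
    (Ψ : X → EuclideanSpace ℝ (Fin n)) (hcont : Continuous Ψ) (hmem : ∀ x, Ψ x ∈ T)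
    (hproper : ∀ K : Set (EuclideanSpace ℝ (Fin n)), K ⊆ T → IsCompact K →
      IsCompact (Ψ ⁻¹' K))
    (w₀ : EuclideanSpace ℝ (Fin n)) (hw₀ : w₀ ∈ T)
    (hnbhd : ∀ x ∈ Ψ ⁻¹' {w₀}, ∃ O : Set X, IsOpen O ∧ x ∈ O ∧
      IsConnected (O ∩ Ψ ⁻¹' {w₀})) :
    ∃ ε > (0:ℝ), ∀ x ∈ Ψ ⁻¹' {w₀}, ∀ y ∈ Ψ ⁻¹' {w₀},
      connectedComponentIn (Ψ ⁻¹' {w₀}) x ≠ connectedComponentIn (Ψ ⁻¹' {w₀}) y →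
      Disjoint (connectedComponentIn (Ψ ⁻¹' (Metric.ball w₀ ε)) x)
        (connectedComponentIn (Ψ ⁻¹' (Metric.ball w₀ ε)) y) := by
    classical
  set K : Set X := Ψ ⁻¹' {w₀} with hKdef
  have hKclosed : IsClosed K := isClosed_singleton.preimage hcont
  have hKcpt : IsCompact K := hproper {w₀} (by simpa using hw₀) isCompact_singleton
  choose O hOopen hOmem hOconn using hnbhd
  -- total versions
  set Of : X → Set X := fun x => if h : x ∈ K then O x h else Set.univ with hOfdef
  have hOfopen : ∀ x, IsOpen (Of x) := by
    intro x; by_cases h : x ∈ K <;> simp only [hOfdef, h, dif_pos, dif_neg, not_false_iff]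
    · exact hOopen x h
    · exact isOpen_univ
  have hOfmem : ∀ x, x ∈ Of x := by
    intro x; by_cases h : x ∈ K <;> simp only [hOfdef, h, dif_pos, dif_neg, not_false_iff]
    · exact hOmem x h
    · trivial
  have hOfsub : ∀ x (hx : x ∈ K), Of x ∩ K ⊆ connectedComponentIn K x := by
    intro x hx
    simp only [hOfdef, dif_pos hx]
    exact (hOconn x hx).isPreconnected.subset_connectedComponentIn
      ⟨hOmem x hx, hx⟩ Set.inter_subset_right
  have hcomp_disj : ∀ z w : X, connectedComponentIn K z ≠ connectedComponentIn K w →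
      Disjoint (connectedComponentIn K z) (connectedComponentIn K w) := by
    intro z w hne
    rw [Set.disjoint_left]
    intro a haz haw
    exact hne ((connectedComponentIn_eq haz).trans (connectedComponentIn_eq haw).symm)
  obtain ⟨t, htK, hcover⟩ := hKcpt.elim_nhds_subcover Of
    (fun x _ => (hOfopen x).mem_nhds (hOfmem x))
  have claimA : ∀ z ∈ K, ∃ i ∈ t, connectedComponentIn K z = connectedComponentIn K i := by
    intro z hz
    obtain ⟨i, hit, hzO⟩ := Set.mem_iUnion₂.mp (hcover hz)
    refine ⟨i, hit, ?_⟩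
    exact (connectedComponentIn_eq (hOfsub i (htK i hit) ⟨hzO, hz⟩)).symm
  -- relative openness of components and complements
  have hrelopen : ∀ w ∈ K, ∃ G : Set X, IsOpen G ∧ connectedComponentIn K w = K ∩ G := by
    intro w hw
    refine ⟨⋃ z ∈ connectedComponentIn K w, Of z, isOpen_biUnion fun z _ => hOfopen z, ?_⟩
    apply Set.Subset.antisymm
    · intro a ha
      exact ⟨connectedComponentIn_subset K w ha, Set.mem_biUnion ha (hOfmem a)⟩
    · rintro a ⟨haK, ha⟩
      obtain ⟨z, hz, haz⟩ := Set.mem_iUnion₂.mp ha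
      have hzK : z ∈ K := connectedComponentIn_subset K w hz
      have : a ∈ connectedComponentIn K z := hOfsub z hzK ⟨haz, haK⟩
      rwa [connectedComponentIn_eq hz]
  have hrelopen_compl : ∀ w ∈ K, ∃ G : Set X, IsOpen G ∧
      K \ connectedComponentIn K w = K ∩ G := by
    intro w hw
    refine ⟨⋃ z ∈ K \ connectedComponentIn K w, Of z,
      isOpen_biUnion fun z _ => hOfopen z, ?_⟩
    apply Set.Subset.antisymm
    · intro a ha
      exact ⟨ha.1, Set.mem_biUnion ha (hOfmem a)⟩
    · rintro a ⟨haK, ha⟩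
      obtain ⟨z, hz, haz⟩ := Set.mem_iUnion₂.mp ha
      have hzK : z ∈ K := hz.1
      have haz' : a ∈ connectedComponentIn K z := hOfsub z hzK ⟨haz, haK⟩
      refine ⟨haK, fun hcon => hz.2 ?_⟩
      have h1 : connectedComponentIn K w = connectedComponentIn K a :=
        connectedComponentIn_eq hcon
      have h2 : connectedComponentIn K z = connectedComponentIn K a :=
        connectedComponentIn_eq haz'
      rw [h1, ← h2]
      exact mem_connectedComponentIn hzK
  have hCcpt : ∀ w ∈ K, IsCompact (connectedComponentIn K w) ∧
      IsCompact (K \ connectedComponentIn K w) := by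
    intro w hw
    obtain ⟨G₁, hG₁, hCeq⟩ := hrelopen w hw
    obtain ⟨G₂, hG₂, hDeq⟩ := hrelopen_compl w hw
    have hCK : connectedComponentIn K w ⊆ K := connectedComponentIn_subset K w
    have hC : connectedComponentIn K w = K \ G₂ := by
      rw [← Set.diff_diff_cancel_left hCK, hDeq, Set.diff_self_inter]
    have hD : K \ connectedComponentIn K w = K \ G₁ := by
      rw [hCeq, Set.diff_self_inter]
    constructor
    · exact hKcpt.of_isClosed_subset (hC ▸ hKclosed.sdiff hG₂) hCK
    · exact hKcpt.of_isClosed_subset (hD ▸ hKclosed.sdiff hG₁) Set.diff_subset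
  -- separation
  have hsep : ∀ i : X, ∃ VV : Set X × Set X, IsOpen VV.1 ∧ IsOpen VV.2 ∧
      Disjoint VV.1 VV.2 ∧ (i ∈ t →
        connectedComponentIn K i ⊆ VV.1 ∧ K \ connectedComponentIn K i ⊆ VV.2) := by
    intro i
    by_cases hi : i ∈ t
    · obtain ⟨h1, h2⟩ := hCcpt i (htK i hi)
      obtain ⟨V, V', hV, hV', hsV, hsV', hd⟩ :=
        SeparatedNhds.of_isCompact_isCompact h1 h2 Set.disjoint_sdiff_right
      exact ⟨(V, V'), hV, hV', hd, fun _ => ⟨hsV, hsV'⟩⟩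
    · exact ⟨(∅, ∅), isOpen_empty, isOpen_empty, disjoint_bot_left, fun h => absurd h hi⟩
  choose VV hV1 hV2 hVd hVt using hsep
  set W : X → Set X := fun i => (VV i).1 ∩
    ⋂ j ∈ t.filter (fun j => connectedComponentIn K j ≠ connectedComponentIn K i),
      (VV j).2 with hWdef
  have hWopen : ∀ i, IsOpen (W i) :=
    fun i => (hV1 i).inter (isOpen_biInter_finset fun j _ => hV2 j)
  have hWsub2 : ∀ i, ∀ j ∈ t, connectedComponentIn K j ≠ connectedComponentIn K i →
      W i ⊆ (VV j).2 := by
    intro i j hjt hne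
    exact Set.inter_subset_right.trans
      (Set.biInter_subset_of_mem (Finset.mem_filter.mpr ⟨hjt, hne⟩))
  have hCW : ∀ i ∈ t, connectedComponentIn K i ⊆ W i := by
    intro i hi
    refine Set.subset_inter (hVt i hi).1 (Set.subset_iInter₂ fun j hj => ?_)
    obtain ⟨hjt, hne⟩ := Finset.mem_filter.mp hj
    intro z hz
    refine (hVt j hjt).2 ⟨connectedComponentIn_subset K i hz, fun hzj => ?_⟩
    exact Set.disjoint_left.mp (hcomp_disj j i hne) hzj hz
  have hWdisj : ∀ i ∈ t, ∀ j ∈ t,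
      connectedComponentIn K i ≠ connectedComponentIn K j → Disjoint (W i) (W j) := by
    intro i hi j hj hne
    exact (hVd j).symm.mono (hWsub2 i j hj (Ne.symm hne)) Set.inter_subset_left
  have hKW : ∀ i ∈ t, ∀ z ∈ K, z ∈ W i → z ∈ connectedComponentIn K i := by
    intro i hi z hz hzW
    obtain ⟨j, hjt, hzj⟩ := claimA z hz
    by_cases hc : connectedComponentIn K j = connectedComponentIn K i
    · rw [← hc, ← hzj]; exact mem_connectedComponentIn hz
    · exfalso
      have h1 : z ∈ (VV j).2 := hWsub2 i j hjt hc hzW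
      have h2 : z ∈ (VV j).1 := (hVt j hjt).1 (hzj ▸ mem_connectedComponentIn hz)
      exact Set.disjoint_left.mp (hVd j) h2 h1
  have hKU : K ⊆ ⋃ i ∈ t, W i := by
    intro z hz
    obtain ⟨i, hit, hzi⟩ := claimA z hz
    exact Set.mem_biUnion hit (hCW i hit (hzi ▸ mem_connectedComponentIn hz))
  -- the epsilon claim
  have hball : ∃ ε > (0:ℝ), Ψ ⁻¹' (Metric.ball w₀ ε) ⊆ ⋃ i ∈ t, W i := by
    by_contra hcon
    push_neg at hcon
    have hseq : ∀ k : ℕ, ∃ x : X, Ψ x ∈ Metric.ball w₀ (1 / (k + 1)) ∧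
        x ∉ ⋃ i ∈ t, W i := by
      intro k
      obtain ⟨x, hx1, hx2⟩ := Set.not_subset.mp (hcon (1 / (k + 1)) (by positivity))
      exact ⟨x, hx1, hx2⟩
    choose u hu1 hu2 using hseq
    have htend : Filter.Tendsto (Ψ ∘ u) Filter.atTop (𝓝 w₀) := by
      rw [tendsto_iff_dist_tendsto_zero]
      refine squeeze_zero (fun k => dist_nonneg) (fun k => ?_)
        tendsto_one_div_add_atTop_nhds_zero_nat
      exact le_of_lt (mem_ball.mp (hu1 k))
    have hScpt : IsCompact (insert w₀ (Set.range (Ψ ∘ u))) := htend.isCompact_insert_range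
    have hST : insert w₀ (Set.range (Ψ ∘ u)) ⊆ T := by
      rintro a (rfl | ⟨k, rfl⟩)
      · exact hw₀
      · exact hmem _
    have hPcpt : IsCompact (Ψ ⁻¹' insert w₀ (Set.range (Ψ ∘ u))) := hproper _ hST hScpt
    have hle : Filter.map u Filter.atTop ≤ 𝓟 (Ψ ⁻¹' insert w₀ (Set.range (Ψ ∘ u))) := by
      rw [Filter.le_principal_iff]
      exact Filter.mem_map.mpr (Filter.univ_mem' fun k => Or.inr ⟨k, rfl⟩)
    obtain ⟨x₀, hx₀mem, hx₀⟩ := hPcpt.exists_clusterPt hle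
    have hΨx₀ : Ψ x₀ = w₀ := by
      have h1 : ClusterPt (Ψ x₀) (𝓝 w₀) :=
        hx₀.map hcont.continuousAt (Filter.tendsto_map'_iff.mpr htend)
      exact eq_of_nhds_neBot h1
    have hx₀K : x₀ ∈ K := by simpa [hKdef] using hΨx₀
    have hUx : (⋃ i ∈ t, W i) ∈ 𝓝 x₀ :=
      (isOpen_biUnion fun i _ => hWopen i).mem_nhds (hKU hx₀K)
    have hUc : (⋃ i ∈ t, W i)ᶜ ∈ Filter.map u Filter.atTop :=
      Filter.mem_map.mpr (Filter.univ_mem' fun k => hu2 k)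
    obtain ⟨a, ha1, ha2⟩ := clusterPt_iff_nonempty.mp hx₀ hUx hUc
    exact ha2 ha1
  obtain ⟨ε, hε, hsub⟩ := hball
  refine ⟨ε, hε, ?_⟩
  intro x hx y hy hne
  by_contra hdisj
  rw [Set.not_disjoint_iff] at hdisj
  obtain ⟨z, hzx, hzy⟩ := hdisj
  set B : Set X := Ψ ⁻¹' Metric.ball w₀ ε with hBdef
  have hΨx : Ψ x = w₀ := hx
  have hΨy : Ψ y = w₀ := hy
  have hxB : x ∈ B := by simp [hBdef, hΨx, hε]
  have hyB : y ∈ B := by simp [hBdef, hΨy, hε]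
  have heq : connectedComponentIn B x = connectedComponentIn B y :=
    (connectedComponentIn_eq hzx).trans (connectedComponentIn_eq hzy).symm
  set Wc := connectedComponentIn B x with hWcdef
  have hxW : x ∈ Wc := mem_connectedComponentIn hxB
  have hyW : y ∈ Wc := heq ▸ mem_connectedComponentIn hyB
  obtain ⟨i, hit, hxCi⟩ := claimA x hx
  set A : Set X := ⋃ j ∈ t.filter
    (fun j => connectedComponentIn K j = connectedComponentIn K i), W j with hAdef
  set Bs : Set X := ⋃ j ∈ t.filter
    (fun j => connectedComponentIn K j ≠ connectedComponentIn K i), W j with hBsdef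
  have hAopen : IsOpen A := isOpen_biUnion fun j _ => hWopen j
  have hBsopen : IsOpen Bs := isOpen_biUnion fun j _ => hWopen j
  have hABd : Disjoint A Bs := by
    rw [Set.disjoint_left]
    intro a haA haB
    obtain ⟨j1, hj1, haj1⟩ := Set.mem_iUnion₂.mp haA
    obtain ⟨j2, hj2, haj2⟩ := Set.mem_iUnion₂.mp haB
    obtain ⟨hj1t, hj1e⟩ := Finset.mem_filter.mp hj1
    obtain ⟨hj2t, hj2e⟩ := Finset.mem_filter.mp hj2
    have : connectedComponentIn K j1 ≠ connectedComponentIn K j2 := by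
      rw [hj1e]; exact fun h => hj2e h.symm
    exact Set.disjoint_left.mp (hWdisj j1 hj1t j2 hj2t this) haj1 haj2
  have hsubAB : Wc ⊆ A ∪ Bs := by
    intro a ha
    have haU : a ∈ ⋃ i ∈ t, W i := hsub (connectedComponentIn_subset B x ha)
    obtain ⟨j, hjt, haj⟩ := Set.mem_iUnion₂.mp haU
    by_cases hc : connectedComponentIn K j = connectedComponentIn K i
    · exact Or.inl (Set.mem_biUnion (Finset.mem_filter.mpr ⟨hjt, hc⟩) haj)
    · exact Or.inr (Set.mem_biUnion (Finset.mem_filter.mpr ⟨hjt, hc⟩) haj)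
  have hAx : (Wc ∩ A).Nonempty := by
    refine ⟨x, hxW, Set.mem_biUnion (Finset.mem_filter.mpr ⟨hit, rfl⟩) ?_⟩
    exact hCW i hit (hxCi ▸ mem_connectedComponentIn hx)
  have hWA : Wc ⊆ A :=
    IsPreconnected.subset_left_of_subset_union hAopen hBsopen hABd hsubAB hAx
      isPreconnected_connectedComponentIn
  have hyA := hWA hyW
  obtain ⟨j, hj, hyj⟩ := Set.mem_iUnion₂.mp hyA
  obtain ⟨hjt, hje⟩ := Finset.mem_filter.mp hj
  have hyCj : y ∈ connectedComponentIn K j := hKW j hjt y hy hyj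
  exact hne (hxCi.trans ((hje.symm.trans (connectedComponentIn_eq hyCj)).symm).symm)
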